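/- Let F be a probability distribution on nonnegative reals with finite expectation, and let v_1, ..., v_n be i.i.d. samples from F. Then E[max(v_1,...,v_n)] ≤ E[v | v ≥ F^{-1}(1 - 1/n)], i.e., the expected maximum of n i.i.d. samples is at most the conditional expectation of a single sample above its (1 - 1/n)-quantile. -/

import Mathlib

open MeasureTheory

lemma my_map_eval (n : ℕ) (μ : Measure ℝ) [IsProbabilityMeasure μ] (i : Fin n) :
    Measure.map (fun x : Fin n → ℝ => x i) (Measure.pi fun _ : Fin n => μ) = μ := by
  ext s hs
  rw [Measure.map_apply (measurable_pi_apply i) hs]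
  have h : (fun x : Fin n → ℝ => x i) ⁻¹' s
      = Set.pi Set.univ (Function.update (fun _ : Fin n => Set.univ) i s) :=
    Set.eval_preimage
  rw [h, Measure.pi_pi, Finset.prod_eq_single i]
  · simp
  · intro j _ hj; simp [Function.update_of_ne hj]
  · simp


/-- The expected maximum of `n` i.i.d. samples from a nonnegative distribution `μ`
is at most the conditional expectation of a single sample above its `(1-1/n)`-quantile
(an event assumed to have probability exactly `1/n`). -/
theorem stmt0 (n : ℕ) (hn : 1 ≤ n) (μ : Measure ℝ) [IsProbabilityMeasure μ]
    (hnonneg : ∀ᵐ x ∂μ, 0 ≤ x) (hint : Integrable id μ)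
    (q : ℝ) (hq : μ {x | q ≤ x} = ENNReal.ofReal (1 / n))
    (hmax : Integrable (fun x : Fin n → ℝ => ⨆ i, x i) (Measure.pi fun _ : Fin n => μ)) :
    ∫ x : Fin n → ℝ, (⨆ i, x i) ∂(Measure.pi fun _ : Fin n => μ)
      ≤ (n : ℝ) * ∫ x in {x : ℝ | q ≤ x}, x ∂μ := by
  have hn0 : (0:ℝ) < n := by exact_mod_cast hn
  haveI : Nonempty (Fin n) := ⟨⟨0, hn⟩⟩
  set g : ℝ → ℝ := fun t => max (t - q) 0 with hg
  have hgint : Integrable g μ := (hint.sub (integrable_const q)).pos_part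
  have hmp : ∀ i : Fin n, MeasurePreserving (fun x : Fin n → ℝ => x i)
      (Measure.pi fun _ : Fin n => μ) μ :=
    fun i => ⟨measurable_pi_apply i, my_map_eval n μ i⟩
  -- integrability of each coordinate composition
  have hgi : ∀ i : Fin n,
      Integrable (fun x : Fin n → ℝ => g (x i)) (Measure.pi fun _ : Fin n => μ) :=
    fun i => (integrable_map_measure (by rw [my_map_eval n μ i]; exact hgint.1)
      (measurable_pi_apply i).aemeasurable).mp (by rw [my_map_eval n μ i]; exact hgint)
  -- RHS integrable
  have hRint : Integrable (fun x : Fin n → ℝ => q + ∑ i : Fin n, g (x i))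
      (Measure.pi fun _ : Fin n => μ) :=
    (integrable_const q).add (integrable_finset_sum _ fun i _ => hgi i)
  -- pointwise bound
  have hpt : ∀ x : Fin n → ℝ, (⨆ i, x i) ≤ q + ∑ i : Fin n, g (x i) := by
    intro x
    refine ciSup_le fun i => ?_
    have h1 : x i ≤ q + g (x i) := by
      simp only [hg]
      rcases le_total (x i) q with h | h
      · have h0 : (0:ℝ) ≤ max (x i - q) 0 := le_max_right _ _
        linarith
      · rw [max_eq_left (sub_nonneg.mpr h)]; linarith
    refine h1.trans (add_le_add (le_refl q) ?_)
    exact Finset.single_le_sum (f := fun j => g (x j)) (fun j _ => le_max_right _ _)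
      (Finset.mem_univ i)
  have step1 : ∫ x : Fin n → ℝ, (⨆ i, x i) ∂(Measure.pi fun _ : Fin n => μ)
      ≤ ∫ x : Fin n → ℝ, (q + ∑ i : Fin n, g (x i)) ∂(Measure.pi fun _ : Fin n => μ) :=
    integral_mono hmax hRint hpt
  -- compute RHS integral
  have hmeas : MeasurableSet {x : ℝ | q ≤ x} := measurableSet_Ici
  have hcoord : ∀ i : Fin n,
      ∫ x : Fin n → ℝ, g (x i) ∂(Measure.pi fun _ : Fin n => μ) = ∫ t, g t ∂μ := by
    intro i
    conv_rhs => rw [← my_map_eval n μ i]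
    rw [integral_map (measurable_pi_apply i).aemeasurable
      (by rw [my_map_eval n μ i]; exact hgint.1)]
  have step2 : ∫ x : Fin n → ℝ, (q + ∑ i : Fin n, g (x i)) ∂(Measure.pi fun _ : Fin n => μ)
      = q + n * ∫ t, g t ∂μ := by
    rw [integral_add (integrable_const q) (integrable_finset_sum _ fun i _ => hgi i),
      integral_const, integral_finset_sum _ fun i _ => hgi i]
    simp only [hcoord]
    simp [mul_comm]
  -- ∫ g = ∫_{q ≤ x} (x - q)
  have hgind : g = Set.indicator {x : ℝ | q ≤ x} (fun t => t - q) := by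
    funext t
    by_cases h : q ≤ t
    · simp [hg, Set.indicator_of_mem (by exact h : t ∈ {x : ℝ | q ≤ x}),
        max_eq_left (sub_nonneg.mpr h)]
    · have : t - q ≤ 0 := by linarith [lt_of_not_ge h]
      simp [hg, Set.indicator_of_notMem (by exact h : t ∉ {x : ℝ | q ≤ x}),
        max_eq_right this]
  have hμs : (μ {x : ℝ | q ≤ x}).toReal = 1 / n := by
    rw [hq, ENNReal.toReal_ofReal (by positivity)]
  have step3 : ∫ t, g t ∂μ = (∫ t in {x : ℝ | q ≤ x}, t ∂μ) - q * (1 / n) := by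
    rw [hgind, integral_indicator hmeas]
    rw [integral_sub (f := fun t : ℝ => t) hint.integrableOn
      (integrableOn_const (measure_lt_top μ _).ne), setIntegral_const, measureReal_def, hμs,
      smul_eq_mul]
    ring
  rw [step2, step3] at step1
  calc ∫ x : Fin n → ℝ, (⨆ i, x i) ∂(Measure.pi fun _ : Fin n => μ)
      ≤ q + n * ((∫ t in {x : ℝ | q ≤ x}, t ∂μ) - q * (1 / n)) := step1
    _ = (n : ℝ) * ∫ x in {x : ℝ | q ≤ x}, x ∂μ := by field_simp; ring
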